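/- Let ε ≥ 0, R > 0, and let α > 0 be a real number with J_1(α) = 0. Set β = −α² / (R·(1 + ε·α²)) and define ψ : (0,1] → ℝ by ψ(r) = J_0(α·r) − J_0(α). Then −(1/R + β·ε)·Δ_0(Δ_0 ψ)(r) = −β·(Δ_0 ψ)(r) for all r ∈ (0,1), and ψ(1) = 0 and ψ'(1) = 0, where Δ_0 u(r) = u''(r) + u'(r)/r. In other words, (w, ψ) = (0, J_0(α·) − J_0(α)) is an eigensolution of the separated eigenvalue problem with azimuthal wavenumber m = 0 and eigenvalue β. -/

import Mathlib

noncomputable section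

/-- The (real) Bessel function of the first kind of integer order m ≥ 0,
`J_m(x) = Σ_{k≥0} (−1)^k/(k!(k+m)!) (x/2)^{2k+m}`. -/
def besselJr (m : ℕ) (x : ℝ) : ℝ :=
  ∑' k : ℕ, ((-1 : ℝ) ^ k / ((Nat.factorial k : ℝ) * (Nat.factorial (k + m) : ℝ)))
    * (x / 2) ^ (2 * k + m)

/-- The radial Laplacian for azimuthal wavenumber 0: `Δ₀u = u'' + u'/r`. -/
def lap0 (u : ℝ → ℝ) : ℝ → ℝ := fun r => deriv (deriv u) r + deriv u r / r

namespace BesselAux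


/-- Sum of a power series with given coefficients. -/
def gs (c : ℕ → ℝ) (y : ℝ) : ℝ := ∑' k : ℕ, c k * y ^ k

/-- Coefficients of the derivative series. -/
def dcoef (c : ℕ → ℝ) (k : ℕ) : ℝ := ((k : ℝ) + 1) * c (k + 1)

def ac (k : ℕ) : ℝ := (-1) ^ k / ((Nat.factorial k : ℝ) * (Nat.factorial k : ℝ))
def bc (k : ℕ) : ℝ := (-1) ^ k / ((Nat.factorial k : ℝ) * (Nat.factorial (k + 1) : ℝ))

lemma abs_aux (n k m : ℕ) :
    |(-1 : ℝ) ^ n / ((Nat.factorial k : ℝ) * (Nat.factorial m : ℝ))|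
      ≤ 1 / (Nat.factorial k : ℝ) := by
  have hk : (0 : ℝ) < (Nat.factorial k : ℝ) := by exact_mod_cast k.factorial_pos
  have hm : (1 : ℝ) ≤ (Nat.factorial m : ℝ) := by exact_mod_cast m.factorial_pos
  rw [abs_div, abs_pow, abs_neg, abs_one, one_pow, abs_of_pos (by positivity)]
  exact one_div_le_one_div_of_le hk (le_mul_of_one_le_right hk.le hm)

lemma abs_ac (k : ℕ) : |ac k| ≤ 1 / (Nat.factorial k : ℝ) := abs_aux k k k
lemma abs_bc (k : ℕ) : |bc k| ≤ 1 / (Nat.factorial k : ℝ) := abs_aux k k (k+1)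

lemma hdca : dcoef ac = fun k => -bc k := by
  funext k
  have hk : ((Nat.factorial k : ℝ)) ≠ 0 := by positivity
  have hk1 : ((k : ℝ) + 1) ≠ 0 := by positivity
  simp only [dcoef, ac, bc, Nat.factorial_succ]
  push_cast
  rw [pow_succ]
  field_simp

lemma hdcb (k : ℕ) : dcoef bc k =
    (-1) ^ (k + 1) / ((Nat.factorial k : ℝ) * (Nat.factorial (k + 2) : ℝ)) := by
  have hk : ((Nat.factorial k : ℝ)) ≠ 0 := by positivity
  have hk1 : ((k : ℝ) + 1) ≠ 0 := by positivity
  simp only [dcoef, bc, Nat.factorial_succ]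
  push_cast
  field_simp

lemma abs_dcb (k : ℕ) : |dcoef bc k| ≤ 1 / (Nat.factorial k : ℝ) := by
  rw [hdcb]; exact abs_aux (k+1) k (k+2)

lemma abs_kbc (k : ℕ) : |(k : ℝ) * bc k| ≤ 1 / (Nat.factorial k : ℝ) := by
  have hk : (0 : ℝ) < (Nat.factorial k : ℝ) := by exact_mod_cast k.factorial_pos
  have hk1 : (0 : ℝ) < (Nat.factorial (k+1) : ℝ) := by exact_mod_cast (k+1).factorial_pos
  have h1 : (k : ℝ) ≤ (Nat.factorial (k+1) : ℝ) := by
    exact_mod_cast (Nat.le_succ k).trans (Nat.self_le_factorial _)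
  rw [bc, abs_mul, abs_div, abs_pow, abs_neg, abs_one, one_pow,
    abs_of_nonneg (Nat.cast_nonneg k), abs_of_pos (by positivity),
    mul_one_div, div_le_div_iff₀ (by positivity) hk]
  nlinarith [hk.le, hk1.le, mul_le_mul_of_nonneg_right h1 hk.le]

lemma hba (k : ℕ) : ((k : ℝ) + 1) * bc k = ac k := by
  have hk : ((Nat.factorial k : ℝ)) ≠ 0 := by positivity
  have hk1 : ((k : ℝ) + 1) ≠ 0 := by positivity
  simp only [ac, bc, Nat.factorial_succ]
  push_cast
  field_simp

lemma summable_gs {c : ℕ → ℝ} (hc : ∀ k, |c k| ≤ 1 / (Nat.factorial k : ℝ)) (y : ℝ) :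
    Summable fun k => c k * y ^ k := by
  refine Summable.of_norm_bounded (g := fun k => |y| ^ k / (Nat.factorial k : ℝ))
    (Real.summable_pow_div_factorial _) (fun k => ?_)
  rw [Real.norm_eq_abs, abs_mul, abs_pow]
  calc |c k| * |y| ^ k ≤ (1 / (Nat.factorial k : ℝ)) * |y| ^ k :=
        mul_le_mul_of_nonneg_right (hc k) (by positivity)
    _ = |y| ^ k / (Nat.factorial k : ℝ) := by ring

lemma hasDerivAt_gs {c : ℕ → ℝ} (hc : ∀ k, |c k| ≤ 1 / (Nat.factorial k : ℝ))
    (hdc : ∀ k, |dcoef c k| ≤ 1 / (Nat.factorial k : ℝ)) (y : ℝ) :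
    HasDerivAt (gs c) (gs (dcoef c) y) y := by
  set M : ℝ := |y| + 1 with hM
  have hM1 : (1 : ℝ) ≤ M := by rw [hM]; linarith [abs_nonneg y]
  set u : ℕ → ℝ := fun k => Nat.casesOn k 0 (fun n => M ^ n / (Nat.factorial n : ℝ)) with hu_def
  have hu : Summable u := by
    have h := Real.summable_pow_div_factorial M
    exact (summable_nat_add_iff 1).mp (by simpa [hu_def] using h)
  have hmem : y ∈ Metric.ball (0 : ℝ) M := by
    rw [Metric.mem_ball, Real.dist_eq, sub_zero, hM]
    exact lt_add_one _
  have h0mem : (0 : ℝ) ∈ Metric.ball (0 : ℝ) M := by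
    rw [Metric.mem_ball, Real.dist_eq, sub_zero, abs_zero, hM]
    linarith [abs_nonneg y]
  have hg : ∀ (k : ℕ) (z : ℝ), z ∈ Metric.ball (0:ℝ) M →
      HasDerivAt (fun z => c k * z ^ k) (c k * ((k : ℝ) * z ^ (k - 1))) z :=
    fun k z _ => (hasDerivAt_pow k z).const_mul (c k)
  have hg' : ∀ (k : ℕ) (z : ℝ), z ∈ Metric.ball (0:ℝ) M →
      ‖c k * ((k : ℝ) * z ^ (k - 1))‖ ≤ u k := by
    intro k z hz
    have hzM : |z| ≤ M := by
      have := Metric.mem_ball.mp hz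
      rw [Real.dist_eq, sub_zero] at this
      linarith
    cases k with
    | zero => simp [hu_def]
    | succ n =>
      have e1 : u (n+1) = M ^ n / (Nat.factorial n : ℝ) := rfl
      have e2 : ‖c (n+1) * ((↑(n+1) : ℝ) * z ^ (n+1-1))‖ = |dcoef c n| * |z| ^ n := by
        simp only [Nat.add_sub_cancel, Real.norm_eq_abs, dcoef, abs_mul, abs_pow]
        push_cast
        ring
      rw [e1, e2]
      calc |dcoef c n| * |z| ^ n ≤ (1 / (Nat.factorial n : ℝ)) * M ^ n := by
            apply mul_le_mul (hdc n) (pow_le_pow_left₀ (abs_nonneg z) hzM n)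
              (by positivity) (by positivity)
        _ = M ^ n / (Nat.factorial n : ℝ) := by ring
  have hg0 : Summable fun k => c k * (0 : ℝ) ^ k := by
    apply summable_of_ne_finset_zero (s := {0})
    intro k hk
    simp only [Finset.mem_singleton] at hk
    simp [zero_pow hk]
  have H := hasDerivAt_tsum_of_isPreconnected hu Metric.isOpen_ball
    (convex_ball (0:ℝ) M).isPreconnected hg hg' h0mem hg0 hmem
  have hs2 : Summable (fun k => c k * ((k : ℝ) * y ^ (k - 1))) :=
    Summable.of_norm_bounded hu (fun k => hg' k y hmem)
  have hval : (∑' k : ℕ, c k * ((k : ℝ) * y ^ (k - 1))) = gs (dcoef c) y := by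
    rw [Summable.tsum_eq_zero_add hs2]
    simp only [Nat.cast_zero, zero_mul, mul_zero, zero_add]
    refine tsum_congr fun k => ?_
    simp only [gs, dcoef, Nat.add_sub_cancel]
    push_cast
    ring
  rw [← hval]
  exact H

lemma gid (y : ℝ) : gs bc y + y * gs (dcoef bc) y = gs ac y := by
  have hb := summable_gs abs_bc y
  have hkb : Summable (fun k : ℕ => ((k : ℝ) * bc k) * y ^ k) := summable_gs abs_kbc y
  have h1 : y * gs (dcoef bc) y = ∑' k : ℕ, ((↑(k+1) : ℝ) * bc (k+1)) * y ^ (k+1) := by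
    simp only [gs]
    rw [← tsum_mul_left]
    refine tsum_congr fun k => ?_
    simp only [dcoef]
    push_cast
    ring
  have h2 : (∑' k : ℕ, ((↑(k+1) : ℝ) * bc (k+1)) * y ^ (k+1))
      = ∑' k : ℕ, ((k : ℝ) * bc k) * y ^ k := by
    rw [Summable.tsum_eq_zero_add hkb]
    simp
  rw [h1, h2, gs, gs, ← Summable.tsum_add hb hkb]
  refine tsum_congr fun k => ?_
  rw [← hba k]
  ring

lemma abs_dca (k : ℕ) : |dcoef ac k| ≤ 1 / (Nat.factorial k : ℝ) := by
  rw [hdca]; simpa using abs_bc k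

lemma J0_eq (x : ℝ) : besselJr 0 x = gs ac ((x / 2) ^ 2) := by
  simp only [besselJr, gs, ac]
  refine tsum_congr fun k => ?_
  rw [Nat.add_zero, Nat.add_zero, ← pow_mul]

lemma J1_eq (x : ℝ) : besselJr 1 x = (x / 2) * gs bc ((x / 2) ^ 2) := by
  simp only [besselJr, gs, bc]
  rw [← tsum_mul_left]
  refine tsum_congr fun k => ?_
  rw [pow_succ, ← pow_mul]
  ring

/-- value of J₁'. -/
def D1 (x : ℝ) : ℝ :=
  1 / 2 * gs bc ((x / 2) ^ 2) + x / 2 * (gs (dcoef bc) ((x / 2) ^ 2) * (x / 2))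

lemma hq (x : ℝ) : HasDerivAt (fun x : ℝ => (x / 2) ^ 2) (x / 2) x := by
  have h := ((hasDerivAt_id x).div_const 2).fun_pow 2
  simpa using h.congr_deriv (by norm_num; ring)

lemma hasDerivAt_J0 (x : ℝ) : HasDerivAt (besselJr 0) (-besselJr 1 x) x := by
  have h := (hasDerivAt_gs abs_ac abs_dca ((x / 2) ^ 2)).comp x (hq x)
  have hf : besselJr 0 = fun x => gs ac ((x / 2) ^ 2) := funext J0_eq
  rw [hf, J1_eq]
  convert h using 1
  case e'_4 => rfl
  case e'_5 => rfl
  case e'_8 => rfl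
  rw [hdca]
  have : gs (fun k => -bc k) ((x / 2) ^ 2) = -gs bc ((x / 2) ^ 2) := by
    simp only [gs, neg_mul, tsum_neg]
  rw [this]
  ring

lemma hasDerivAt_J1 (x : ℝ) : HasDerivAt (besselJr 1) (D1 x) x := by
  have hg := (hasDerivAt_gs abs_bc abs_dcb ((x / 2) ^ 2)).comp x (hq x)
  have h := ((hasDerivAt_id x).div_const 2).mul hg
  have hf : besselJr 1 = fun x => x / 2 * gs bc ((x / 2) ^ 2) := funext J1_eq
  rw [hf, D1]
  exact h

end BesselAux

open BesselAux in
/-- The second family of m = 0 eigenmodes: if α is a zero of J₁ then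
`ψ(r) = J₀(αr) − J₀(α)` solves `−(1/R + βε)Δ₀²ψ = −βΔ₀ψ` with
`ψ(1) = ψ'(1) = 0`, where `β = −α²/(R(1+εα²))`. -/
theorem m_zero_second_eigenmodes (ε R α : ℝ) (hε : 0 ≤ ε) (hR : 0 < R) (hα : 0 < α)
    (hroot : besselJr 1 α = 0) (β : ℝ) (hβ : β = -α ^ 2 / (R * (1 + ε * α ^ 2)))
    (ψ : ℝ → ℝ) (hψ : ψ = fun r => besselJr 0 (α * r) - besselJr 0 α) :
    (∀ r ∈ Set.Ioo (0 : ℝ) 1,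
      -(1 / R + β * ε) * lap0 (lap0 ψ) r = -β * lap0 ψ r)
    ∧ ψ 1 = 0 ∧ deriv ψ 1 = 0 := by
  subst hψ hβ
  have hαr : ∀ r : ℝ, HasDerivAt (fun s => α * s) α r := fun r => by
    simpa using (hasDerivAt_id r).const_mul α
  -- first derivative of ψ
  have hdψ : ∀ r : ℝ, HasDerivAt (fun r => besselJr 0 (α * r) - besselJr 0 α)
      (-besselJr 1 (α * r) * α) r := by
    intro r
    exact ((hasDerivAt_J0 (α * r)).comp r (hαr r)).sub_const _
  have hderivψ : deriv (fun r => besselJr 0 (α * r) - besselJr 0 α)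
      = fun r => -besselJr 1 (α * r) * α := funext fun r => (hdψ r).deriv
  -- second derivative of ψ
  have hddψ : ∀ r : ℝ, HasDerivAt (deriv (fun r => besselJr 0 (α * r) - besselJr 0 α))
      (-(D1 (α * r) * α) * α) r := by
    intro r
    rw [hderivψ]
    exact (((hasDerivAt_J1 (α * r)).comp r (hαr r)).neg).mul_const α
  -- lap0 ψ on the positive axis
  have hlapψ : ∀ r : ℝ, 0 < r → lap0 (fun r => besselJr 0 (α * r) - besselJr 0 α) r
      = -α ^ 2 * besselJr 0 (α * r) := by
    intro r hr
    have hrne : r ≠ 0 := ne_of_gt hr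
    simp only [lap0]
    rw [(hddψ r).deriv, (hdψ r).deriv]
    rw [J1_eq, J0_eq, ← gid ((α * r / 2) ^ 2)]
    simp only [D1]
    field_simp
    ring
  -- derivative of lap0 ψ on the positive axis
  have hL1 : ∀ r : ℝ, 0 < r → HasDerivAt (lap0 (fun r => besselJr 0 (α * r) - besselJr 0 α))
      (-α ^ 2 * (-besselJr 1 (α * r) * α)) r := by
    intro r hr
    have hF : HasDerivAt (fun s => -α ^ 2 * besselJr 0 (α * s))
        (-α ^ 2 * (-besselJr 1 (α * r) * α)) r :=
      (((hasDerivAt_J0 (α * r)).comp r (hαr r))).const_mul (-α ^ 2)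
    apply hF.congr_of_eventuallyEq
    filter_upwards [isOpen_Ioi.mem_nhds hr] with s hs using hlapψ s hs
  have hL2 : ∀ r : ℝ, 0 < r →
      HasDerivAt (deriv (lap0 (fun r => besselJr 0 (α * r) - besselJr 0 α)))
      (-α ^ 2 * (-(D1 (α * r) * α) * α)) r := by
    intro r hr
    have hG : HasDerivAt (fun s => -α ^ 2 * (-besselJr 1 (α * s) * α))
        (-α ^ 2 * (-(D1 (α * r) * α) * α)) r :=
      ((((hasDerivAt_J1 (α * r)).comp r (hαr r)).neg).mul_const α).const_mul (-α ^ 2)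
    apply hG.congr_of_eventuallyEq
    filter_upwards [isOpen_Ioi.mem_nhds hr] with s hs using (hL1 s hs).deriv
  refine ⟨?_, by simp, ?_⟩
  · intro r hr
    obtain ⟨hr0, hr1⟩ := hr
    have hrne : r ≠ 0 := ne_of_gt hr0
    have hlap2 : lap0 (lap0 (fun r => besselJr 0 (α * r) - besselJr 0 α)) r
        = α ^ 4 * besselJr 0 (α * r) := by
      simp only [lap0]
      rw [(hL2 r hr0).deriv, (hL1 r hr0).deriv]
      rw [J1_eq, J0_eq, ← gid ((α * r / 2) ^ 2)]
      simp only [D1]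
      field_simp
      ring
    rw [hlap2, hlapψ r hr0]
    have h1 : (0 : ℝ) < 1 + ε * α ^ 2 := by positivity
    have hRne : R ≠ 0 := ne_of_gt hR
    field_simp
    ring
  · rw [(hdψ 1).deriv, mul_one, hroot]
    ring
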